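/- Insertion inverts the quotient: let M, N, Q be connected adjacency matrices of orders m, n, q with q = m+n−1. Then M is permutation-conjugate to Q / N (meaning Q / Q_I for some index set I with Q_I = N) if and only if there exists an index i ∈ {1,…,m} and a decomposing map ι_i such that Q is permutation-conjugate to the insertion (N ↪_{(i,ι_i)} M). -/

import Mathlib

open Matrix BigOperators
open scoped Classical

noncomputable section

/-- An adjacency matrix: symmetric with zero diagonal (entries in `ℕ`). -/
def IsAdj {ι : Type*} (M : Matrix ι ι ℕ) : Prop :=
  (∀ i j, M i j = M j i) ∧ ∀ i, M i i = 0

/-- Connectedness of the multigraph encoded by `M`. -/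
def AdjConnected {ι : Type*} (M : Matrix ι ι ℕ) : Prop :=
  ∀ i j : ι, Relation.ReflTransGen (fun a b => M a b ≠ 0) i j

/-- The quotient `M / M_I`: the indices in `I` are collapsed to the single new
index `⊥`, with collapsed entries given by the column sums over `I`. -/
def quotAdj {ι : Type*} (M : Matrix ι ι ℕ) (I : Finset ι) :
    Matrix (WithBot {j : ι // j ∉ I}) (WithBot {j : ι // j ∉ I}) ℕ :=
  fun x y =>
    WithBot.recBotCoe
      (WithBot.recBotCoe 0 (fun j => ∑ a ∈ I, M a j.1) y)
      (fun i => WithBot.recBotCoe (∑ a ∈ I, M i.1 a) (fun j => M i.1 j.1) y) x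

/-- A decomposing map at position `i`: each entry `M j i` (`j ≠ i`) of the `i`-th
column is decomposed into an `n`-tuple of naturals summing to `M j i`. -/
def IsDecomp {m n : ℕ} (M : Matrix (Fin m) (Fin m) ℕ) (i : Fin m)
    (dec : Fin m → Fin n → ℕ) : Prop :=
  ∀ j : Fin m, j ≠ i → ∑ b, dec j b = M j i

/-- The insertion `(N ↪_{(i,ιᵢ)} M)`: vertex `i` of `M` is replaced by `N`, and the
edge multiplicities `M j i` are redistributed to the vertices of `N` according to
the decomposing map `dec`. -/
def insertAdj {m n : ℕ} (N : Matrix (Fin n) (Fin n) ℕ) (M : Matrix (Fin m) (Fin m) ℕ)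
    (i : Fin m) (dec : Fin m → Fin n → ℕ) :
    Matrix ({j : Fin m // j ≠ i} ⊕ Fin n) ({j : Fin m // j ≠ i} ⊕ Fin n) ℕ :=
  fun x y =>
    match x, y with
    | Sum.inl j, Sum.inl k => M j.1 k.1
    | Sum.inl j, Sum.inr b => dec j.1 b
    | Sum.inr b, Sum.inl j => dec j.1 b
    | Sum.inr a, Sum.inr b => N a b

/-- Insertion inverts the quotient: `M ∼ Q / N` (i.e. `M` is, up to permutation,
the quotient of `Q` by a principal submatrix which is a copy of `N`) iff `Q` is,
up to permutation, an insertion of `N` into `M`. -/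
theorem quotAdj_iff_insertAdj (m n q : ℕ) (hq : q + 1 = m + n)
    (M : Matrix (Fin m) (Fin m) ℕ) (N : Matrix (Fin n) (Fin n) ℕ)
    (Q : Matrix (Fin q) (Fin q) ℕ) (hM : IsAdj M) (hN : IsAdj N) (hQ : IsAdj Q)
    (hMc : AdjConnected M) (hNc : AdjConnected N) (hQc : AdjConnected Q) :
    (∃ (I : Finset (Fin q)) (eI : Fin n ≃ {x : Fin q // x ∈ I})
        (eQ : Fin m ≃ WithBot {j : Fin q // j ∉ I}),
      (∀ a b : Fin n, N a b = Q (eI a).1 (eI b).1) ∧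
      (∀ a b : Fin m, M a b = quotAdj Q I (eQ a) (eQ b))) ↔
    (∃ (i : Fin m) (dec : Fin m → Fin n → ℕ), IsDecomp M i dec ∧
      ∃ eP : Fin q ≃ ({j : Fin m // j ≠ i} ⊕ Fin n),
        ∀ a b : Fin q, Q a b = insertAdj N M i dec (eP a) (eP b)) := by
  constructor
  · rintro ⟨I, eI, eQ, hN', hM'⟩
    set i : Fin m := eQ.symm ⊥ with hi
    set dec : Fin m → Fin n → ℕ :=
      fun j b => (eQ j).recBotCoe 0 (fun k => Q k.1 (eI b).1) with hdec
    have hIsum : ∀ k : Fin q, ∑ b : Fin n, Q k (eI b).1 = ∑ a ∈ I, Q k a := by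
      intro k
      rw [← Finset.sum_coe_sort I (fun a => Q k a)]
      exact Fintype.sum_equiv eI _ _ (fun b => rfl)
    have hne : ∀ x : {x : Fin q // x ∉ I}, eQ.symm (↑x) ≠ i := by
      intro x h
      exact WithBot.coe_ne_bot (eQ.symm.injective (h.trans hi))
    set f1 : {x : Fin q // x ∉ I} → {j : Fin m // j ≠ i} :=
      fun x => ⟨eQ.symm ↑x, hne x⟩ with hf1
    have hf1bij : Function.Bijective f1 := by
      constructor
      · intro x y h
        have := congrArg Subtype.val h
        exact WithBot.coe_injective (eQ.symm.injective this)
      · rintro ⟨j, hj⟩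
        have hb : eQ j ≠ ⊥ := fun h => hj ((Equiv.eq_symm_apply eQ).mpr h)
        obtain ⟨k, hk⟩ := WithBot.ne_bot_iff_exists.mp hb
        refine ⟨k, Subtype.ext ?_⟩
        show eQ.symm ↑k = j
        rw [hk, Equiv.symm_apply_apply]
    set e1 : {x : Fin q // x ∉ I} ≃ {j : Fin m // j ≠ i} :=
      Equiv.ofBijective f1 hf1bij with he1
    have he1Q : ∀ x : {x : Fin q // x ∉ I}, eQ (e1 x).1 = ↑x := by
      intro x; exact eQ.apply_symm_apply _
    set eP : Fin q ≃ ({j : Fin m // j ≠ i} ⊕ Fin n) :=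
      (Equiv.sumCompl (fun x => x ∈ I)).symm.trans
        ((Equiv.sumComm _ _).trans (Equiv.sumCongr e1 eI.symm)) with heP
    have hePmem : ∀ (x : Fin q) (h : x ∈ I), eP x = Sum.inr (eI.symm ⟨x, h⟩) := by
      intro x h
      simp [heP, Equiv.sumCompl_symm_apply_of_pos h]
    have hePnot : ∀ (x : Fin q) (h : x ∉ I), eP x = Sum.inl (e1 ⟨x, h⟩) := by
      intro x h
      simp [heP, Equiv.sumCompl_symm_apply_of_neg h]
    refine ⟨i, dec, ?_, eP, ?_⟩
    · intro j hj
      have hb : eQ j ≠ ⊥ := fun h => hj ((Equiv.eq_symm_apply eQ).mpr h)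
      obtain ⟨k, hk⟩ := WithBot.ne_bot_iff_exists.mp hb
      have h1 : M j i = ∑ a ∈ I, Q k.1 a := by
        rw [hM' j i, hi, Equiv.apply_symm_apply, ← hk]
        simp [quotAdj]
      rw [h1, ← hIsum]
      refine Finset.sum_congr rfl (fun b _ => ?_)
      simp [hdec, ← hk]
    · intro a b
      by_cases ha : a ∈ I <;> by_cases hb : b ∈ I
      · rw [hePmem a ha, hePmem b hb]
        show Q a b = N (eI.symm ⟨a, ha⟩) (eI.symm ⟨b, hb⟩)
        rw [hN', Equiv.apply_symm_apply, Equiv.apply_symm_apply]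
      · rw [hePmem a ha, hePnot b hb]
        show Q a b = dec (e1 ⟨b, hb⟩).1 (eI.symm ⟨a, ha⟩)
        rw [hdec]
        simp only [he1Q ⟨b, hb⟩, WithBot.recBotCoe_coe, Equiv.apply_symm_apply]
        exact hQ.1 a b
      · rw [hePnot a ha, hePmem b hb]
        show Q a b = dec (e1 ⟨a, ha⟩).1 (eI.symm ⟨b, hb⟩)
        rw [hdec]
        simp only [he1Q ⟨a, ha⟩, WithBot.recBotCoe_coe, Equiv.apply_symm_apply]
      · rw [hePnot a ha, hePnot b hb]
        show Q a b = M (e1 ⟨a, ha⟩).1 (e1 ⟨b, hb⟩).1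
        rw [hM', he1Q ⟨a, ha⟩, he1Q ⟨b, hb⟩]
        simp [quotAdj]
  · rintro ⟨i, dec, hdec, eP, hQ'⟩
    set I : Finset (Fin q) := Finset.univ.filter (fun x => (eP x).isRight) with hI
    have hmem : ∀ x : Fin q, x ∈ I ↔ (eP x).isRight = true := by
      intro x; simp [hI]
    set fI : Fin n → {x : Fin q // x ∈ I} :=
      fun b => ⟨eP.symm (Sum.inr b), by rw [hmem, Equiv.apply_symm_apply]; rfl⟩ with hfI
    have hfIbij : Function.Bijective fI := by
      constructor
      · intro x y h
        have := congrArg Subtype.val h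
        exact Sum.inr_injective (eP.symm.injective this)
      · rintro ⟨x, hx⟩
        obtain ⟨c, hc⟩ := Sum.isRight_iff.mp ((hmem x).mp hx)
        refine ⟨c, Subtype.ext ?_⟩
        show eP.symm (Sum.inr c) = x
        rw [← hc, Equiv.symm_apply_apply]
    set eI : Fin n ≃ {x : Fin q // x ∈ I} := Equiv.ofBijective fI hfIbij with heI
    set fQ : Fin m → WithBot {j : Fin q // j ∉ I} :=
      fun a =>
        if h : a = i then ⊥
        else (↑(⟨eP.symm (Sum.inl ⟨a, h⟩), by
          rw [hmem, Equiv.apply_symm_apply]; simp⟩ : {j : Fin q // j ∉ I}) :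
          WithBot {j : Fin q // j ∉ I}) with hfQ
    have hfQbij : Function.Bijective fQ := by
      constructor
      · intro x y h
        by_cases hx : x = i <;> by_cases hy : y = i
        · rw [hx, hy]
        · rw [hfQ] at h; simp only [dif_pos hx, dif_neg hy] at h
          exact absurd h.symm WithBot.coe_ne_bot
        · rw [hfQ] at h; simp only [dif_pos hy, dif_neg hx] at h
          exact absurd h WithBot.coe_ne_bot
        · rw [hfQ] at h; simp only [dif_neg hx, dif_neg hy] at h
          have h2 := congrArg Subtype.val (WithBot.coe_injective h)
          have h3 := eP.symm.injective h2
          exact congrArg Subtype.val (Sum.inl_injective h3)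
      · intro y
        induction y using WithBot.recBotCoe with
        | bot => exact ⟨i, by rw [hfQ]; simp⟩
        | coe x =>
          have hl : (eP x.1).isLeft := by
            have := (hmem x.1).not.mp x.2
            simpa [Sum.not_isRight] using this
          obtain ⟨j, hj⟩ := Sum.isLeft_iff.mp hl
          refine ⟨j.1, ?_⟩
          rw [hfQ]
          simp only [dif_neg j.2]
          congr 1
          apply Subtype.ext
          show eP.symm (Sum.inl ⟨j.1, j.2⟩) = x.1
          rw [← hj, Equiv.symm_apply_apply]
    set eQ : Fin m ≃ WithBot {j : Fin q // j ∉ I} := Equiv.ofBijective fQ hfQbij with heQ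
    have heQbot : eQ i = ⊥ := by rw [heQ]; show fQ i = ⊥; rw [hfQ]; simp
    have heQval : ∀ (a : Fin m) (h : a ≠ i),
        eQ a = (↑(⟨eP.symm (Sum.inl ⟨a, h⟩), by
          rw [hmem, Equiv.apply_symm_apply]; simp⟩ : {j : Fin q // j ∉ I}) :
          WithBot {j : Fin q // j ∉ I}) := by
      intro a h
      show fQ a = _
      rw [hfQ]; simp only [dif_neg h]
    have hIsum : ∀ (f : Fin q → ℕ),
        ∑ x ∈ I, f x = ∑ c : Fin n, f (eP.symm (Sum.inr c)) := by
      intro f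
      rw [← Finset.sum_coe_sort I f]
      exact (Fintype.sum_equiv eI (fun c => f (eP.symm (Sum.inr c)))
        (fun x => f x.1) (fun c => rfl)).symm
    refine ⟨I, eI, eQ, ?_, ?_⟩
    · intro a b
      show N a b = Q (eP.symm (Sum.inr a)) (eP.symm (Sum.inr b))
      rw [hQ', Equiv.apply_symm_apply, Equiv.apply_symm_apply]
      rfl
    · intro a b
      by_cases ha : a = i <;> by_cases hb : b = i
      · rw [ha, hb, heQbot]
        simpa [quotAdj] using hM.2 i
      · rw [ha, heQbot, heQval b hb]
        show M i b = ∑ x ∈ I, Q x (eP.symm (Sum.inl ⟨b, hb⟩))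
        rw [hIsum]
        have key : ∀ c : Fin n,
            Q (eP.symm (Sum.inr c)) (eP.symm (Sum.inl ⟨b, hb⟩)) = dec b c := by
          intro c
          rw [hQ', Equiv.apply_symm_apply, Equiv.apply_symm_apply]
          rfl
        calc M i b = M b i := hM.1 i b
          _ = ∑ c, dec b c := (hdec b hb).symm
          _ = _ := Finset.sum_congr rfl (fun c _ => (key c).symm)
      · rw [hb, heQbot, heQval a ha]
        show M a i = ∑ x ∈ I, Q (eP.symm (Sum.inl ⟨a, ha⟩)) x
        rw [hIsum]
        have key : ∀ c : Fin n,
            Q (eP.symm (Sum.inl ⟨a, ha⟩)) (eP.symm (Sum.inr c)) = dec a c := by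
          intro c
          rw [hQ', Equiv.apply_symm_apply, Equiv.apply_symm_apply]
          rfl
        calc M a i = ∑ c, dec a c := (hdec a ha).symm
          _ = _ := Finset.sum_congr rfl (fun c _ => (key c).symm)
      · rw [heQval a ha, heQval b hb]
        show M a b = Q (eP.symm (Sum.inl ⟨a, ha⟩)) (eP.symm (Sum.inl ⟨b, hb⟩))
        rw [hQ', Equiv.apply_symm_apply, Equiv.apply_symm_apply]
        rfl


end
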